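/- The gradient-descent compositor preserves updates: with f, g, h, p, q, x, z as above and learning rate ε > 0, the updated parameter of the composite state, (q,p) + ε π_{M+L}(Dh_{(q,p,x)})ᵀ z, equals the pair (q + ε π_M (Dg_{(q,f(p,x))})ᵀ z, p + ε π_L (Df_{(p,x)})ᵀ π_m (Dg_{(q,f(p,x))})ᵀ z) obtained by updating the two states separately in the composed coalgebra. -/

import Mathlib

/-- Concatenation of coordinate blocks: ℝ^a × ℝ^b → ℝ^(a+b). -/
def append {a b : ℕ} (u : Fin a → ℝ) (v : Fin b → ℝ) : Fin (a + b) → ℝ :=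
  fun i => Sum.elim u v (finSumFinEquiv.symm i)

/-- The Jacobian matrix of f at x: entries are the directional derivatives of the
coordinate functions along the standard basis vectors. -/
noncomputable def jac {a b : ℕ} (f : (Fin a → ℝ) → Fin b → ℝ) (x : Fin a → ℝ) :
    Matrix (Fin b) (Fin a) ℝ :=
  fun i j => fderiv ℝ f x (Pi.single j 1) i

open ContinuousLinearMap in
noncomputable def appendCLM (a b : ℕ) : ((Fin a → ℝ) × (Fin b → ℝ)) →L[ℝ] (Fin (a+b) → ℝ) :=
  ContinuousLinearMap.pi (fun i =>
    Sum.elim (fun j => (proj j).comp (fst ℝ _ _)) (fun j => (proj j).comp (snd ℝ _ _))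
      (finSumFinEquiv.symm i))

@[simp] lemma append_castAdd {a b : ℕ} (u : Fin a → ℝ) (v : Fin b → ℝ) (i : Fin a) :
    append u v (Fin.castAdd b i) = u i := by
  simp [append]

@[simp] lemma append_natAdd {a b : ℕ} (u : Fin a → ℝ) (v : Fin b → ℝ) (i : Fin b) :
    append u v (Fin.natAdd a i) = v i := by
  simp [append]

@[simp] lemma appendCLM_apply {a b : ℕ} (u : Fin a → ℝ) (v : Fin b → ℝ) :
    appendCLM a b (u, v) = append u v := by
  funext i
  simp only [appendCLM, ContinuousLinearMap.pi_apply, append]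
  cases finSumFinEquiv.symm i <;> simp

open ContinuousLinearMap in
noncomputable def pickCLM {N : ℕ} (a : ℕ) (ι : Fin a → Fin N) : (Fin N → ℝ) →L[ℝ] (Fin a → ℝ) :=
  ContinuousLinearMap.pi (fun i => proj (ι i))

@[simp] lemma pickCLM_apply {N a : ℕ} (ι : Fin a → Fin N) (w : Fin N → ℝ) (i : Fin a) :
    pickCLM a ι w i = w (ι i) := rfl

lemma append_single_castAdd {a b : ℕ} (i : Fin a) :
    append (Pi.single i (1:ℝ)) (0 : Fin b → ℝ) = Pi.single (Fin.castAdd b i) 1 := by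
  funext k
  refine Fin.addCases (fun j => ?_) (fun j => ?_) k
  · simp only [append_castAdd, Pi.single_apply, Fin.ext_iff, Fin.coe_castAdd]
  · simp only [append_natAdd, Pi.zero_apply, Pi.single_apply, Fin.ext_iff, Fin.coe_castAdd,
      Fin.coe_natAdd]
    have := j.isLt; have := i.isLt
    rw [if_neg (by omega)]

lemma append_zero_eq_sum {a b : ℕ} (v : Fin b → ℝ) :
    append (0 : Fin a → ℝ) v
      = ∑ i', v i' • (Pi.single (Fin.natAdd a i') (1:ℝ) : Fin (a+b) → ℝ) := by
  funext k
  rw [Finset.sum_apply]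
  refine Fin.addCases (fun j => ?_) (fun j => ?_) k
  · simp only [append_castAdd, Pi.zero_apply, Pi.smul_apply, Pi.single_apply]
    rw [Finset.sum_eq_zero]
    intro i' _
    have := j.isLt
    rw [if_neg (by simp [Fin.ext_iff]; omega), smul_zero]
  · simp only [append_natAdd, Pi.smul_apply, Pi.single_apply]
    rw [Finset.sum_eq_single j]
    · simp
    · intro i' _ hne
      rw [if_neg (by simp [Fin.ext_iff]; intro hc; exact hne (Fin.ext (by omega))), smul_zero]
    · simp

@[simp] lemma append_zero_zero {a b : ℕ} :
    append (0 : Fin a → ℝ) (0 : Fin b → ℝ) = 0 := by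
  funext k
  refine Fin.addCases (fun j => ?_) (fun j => ?_) k <;> simp

lemma pick_single_hit {N a : ℕ} (ι : Fin a → Fin N) (hι : Function.Injective ι) (i : Fin a) :
    pickCLM a ι (Pi.single (ι i) (1:ℝ)) = Pi.single i 1 := by
  funext k
  simp [Pi.single_apply, hι.eq_iff]

lemma pick_single_miss {N a : ℕ} (ι : Fin a → Fin N) (j : Fin N) (hj : ∀ k, ι k ≠ j) :
    pickCLM a ι (Pi.single j (1:ℝ)) = 0 := by
  funext k
  simp [Pi.single_apply, hj k]


/-- The gradient-descent compositor preserves updates: the updated parameter of the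
composite state, (q,p) + ε·π_{M+L}(Dh).transposez, equals the pair of separate updates
(q + ε·π_M(Dg).transposez, p + ε·π_L(Df).transposeπ_m(Dg).transposez). -/
theorem stmt_18 (L l M m n : ℕ)
    (f : (Fin (L + l) → ℝ) → Fin m → ℝ) (g : (Fin (M + m) → ℝ) → Fin n → ℝ)
    (hf : Differentiable ℝ f) (hg : Differentiable ℝ g)
    (p : Fin L → ℝ) (q : Fin M → ℝ) (x : Fin l → ℝ) (z : Fin n → ℝ)
    (ε : ℝ) (hε : 0 < ε) :
    let h : (Fin ((M + L) + l) → ℝ) → Fin n → ℝ := fun w =>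
      g (append (fun i => w (Fin.castAdd l (Fin.castAdd L i)))
          (f (append (fun i => w (Fin.castAdd l (Fin.natAdd M i)))
              (fun i => w (Fin.natAdd (M + L) i)))))
    (fun i : Fin (M + L) =>
        append q p i +
          ε * ((jac h (append (append q p) x)).transpose.mulVec z) (Fin.castAdd l i)) =
      append
        (fun i : Fin M =>
          q i + ε * ((jac g (append q (f (append p x)))).transpose.mulVec z) (Fin.castAdd m i))
        (fun i : Fin L =>
          p i + ε * ((jac f (append p x)).transpose.mulVec
            (fun i' : Fin m =>
              ((jac g (append q (f (append p x)))).transpose.mulVec z) (Fin.natAdd M i')))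
            (Fin.castAdd l i)) := by
  intro h
  set π1 := pickCLM (N := M + L + l) M (fun i => Fin.castAdd l (Fin.castAdd L i)) with hπ1def
  set π2 := pickCLM (N := M + L + l) L (fun i => Fin.castAdd l (Fin.natAdd M i)) with hπ2def
  set π3 := pickCLM (N := M + L + l) l (fun i => Fin.natAdd (M + L) i) with hπ3def
  set Bc := (appendCLM L l).comp (π2.prod π3) with hBcdef
  set a0 := append (append q p) x with ha0def
  set b0 := append p x with hb0def
  set c0 := append q (f b0) with hc0def
  have hBca0 : Bc a0 = b0 := by
    funext k
    simp only [hBcdef, ContinuousLinearMap.comp_apply, ContinuousLinearMap.prod_apply,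
      appendCLM_apply]
    refine Fin.addCases (fun j => ?_) (fun j => ?_) k <;>
      simp [hπ2def, hπ3def, ha0def, hb0def]
  have hπ1a0 : π1 a0 = q := by
    funext k
    simp [hπ1def, ha0def]
  have hh : h = fun w => g ((appendCLM M m) (π1 w, f (Bc w))) := by
    funext w
    simp only [h, hBcdef, ContinuousLinearMap.comp_apply, ContinuousLinearMap.prod_apply,
      appendCLM_apply]
    rfl
  set Dg := fderiv ℝ g c0 with hDgdef
  set Df := fderiv ℝ f b0 with hDfdef
  have h1 : HasFDerivAt (fun w => f (Bc w)) (Df.comp Bc) a0 := by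
    have h0 := (hf (Bc a0)).hasFDerivAt.comp a0 Bc.hasFDerivAt
    rw [hBca0] at h0
    exact h0
  have h2 : HasFDerivAt (fun w => (π1 w, f (Bc w))) (π1.prod (Df.comp Bc)) a0 :=
    HasFDerivAt.prodMk π1.hasFDerivAt h1
  have h3 : HasFDerivAt (fun w => (appendCLM M m) (π1 w, f (Bc w)))
      ((appendCLM M m).comp (π1.prod (Df.comp Bc))) a0 :=
    (appendCLM M m).hasFDerivAt.comp a0 h2
  have h4 : HasFDerivAt h (Dg.comp ((appendCLM M m).comp (π1.prod (Df.comp Bc)))) a0 := by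
    rw [hh]
    have hc : (appendCLM M m) (π1 a0, f (Bc a0)) = c0 := by
      rw [hπ1a0, hBca0, appendCLM_apply, hc0def]
    have := (hg ((appendCLM M m) (π1 a0, f (Bc a0)))).hasFDerivAt.comp a0 h3
    rwa [hc] at this
  have hjac : ∀ (k : Fin n) (j : Fin (M + L + l)),
      jac h a0 k j = Dg ((appendCLM M m) (π1 (Pi.single j 1), Df (Bc (Pi.single j 1)))) k := by
    intro k j
    simp only [jac, h4.fderiv, ContinuousLinearMap.comp_apply, ContinuousLinearMap.prod_apply]
  funext i
  refine Fin.addCases (fun i₀ => ?_) (fun i₀ => ?_) i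
  · -- M-block
    have e1 : π1 (Pi.single (Fin.castAdd l (Fin.castAdd L i₀)) (1:ℝ)) = Pi.single i₀ 1 :=
      pick_single_hit _ (fun a b hab => by
        simpa [Fin.ext_iff] using hab) i₀
    have e2 : π2 (Pi.single (Fin.castAdd l (Fin.castAdd L i₀)) (1:ℝ)) = 0 :=
      pick_single_miss _ _ (fun k hk => by
        have := i₀.isLt; have := k.isLt
        simp [Fin.ext_iff] at hk; omega)
    have e3 : π3 (Pi.single (Fin.castAdd l (Fin.castAdd L i₀)) (1:ℝ)) = 0 :=
      pick_single_miss _ _ (fun k hk => by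
        have := i₀.isLt; have := k.isLt
        simp [Fin.ext_iff] at hk; omega)
    have eBc : Bc (Pi.single (Fin.castAdd l (Fin.castAdd L i₀)) (1:ℝ)) = 0 := by
      simp only [hBcdef, ContinuousLinearMap.comp_apply, ContinuousLinearMap.prod_apply,
        e2, e3, appendCLM_apply, append_zero_zero]
    have key : ∀ k : Fin n, jac h a0 k (Fin.castAdd l (Fin.castAdd L i₀))
        = jac g c0 k (Fin.castAdd m i₀) := by
      intro k
      rw [hjac, e1, eBc, map_zero, appendCLM_apply, append_single_castAdd]
      rfl
    simp only [append_castAdd, Matrix.mulVec, Matrix.transpose_apply, dotProduct]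
    congr 2
    exact Finset.sum_congr rfl (fun k _ => by rw [key k])
  · -- L-block
    have e1 : π1 (Pi.single (Fin.castAdd l (Fin.natAdd M i₀)) (1:ℝ)) = 0 :=
      pick_single_miss _ _ (fun k hk => by
        have := i₀.isLt; have := k.isLt
        simp [Fin.ext_iff] at hk; omega)
    have e2 : π2 (Pi.single (Fin.castAdd l (Fin.natAdd M i₀)) (1:ℝ)) = Pi.single i₀ 1 :=
      pick_single_hit _ (fun a b hab => by
        simpa [Fin.ext_iff] using hab) i₀
    have e3 : π3 (Pi.single (Fin.castAdd l (Fin.natAdd M i₀)) (1:ℝ)) = 0 :=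
      pick_single_miss _ _ (fun k hk => by
        have := i₀.isLt; have := k.isLt
        simp [Fin.ext_iff] at hk; omega)
    have eBc : Bc (Pi.single (Fin.castAdd l (Fin.natAdd M i₀)) (1:ℝ))
        = Pi.single (Fin.castAdd l i₀) 1 := by
      simp only [hBcdef, ContinuousLinearMap.comp_apply, ContinuousLinearMap.prod_apply,
        e2, e3, appendCLM_apply]
      exact append_single_castAdd i₀
    have key : ∀ k : Fin n, jac h a0 k (Fin.castAdd l (Fin.natAdd M i₀))
        = ∑ i' : Fin m, Df (Pi.single (Fin.castAdd l i₀) 1) i' * jac g c0 k (Fin.natAdd M i') := by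
      intro k
      rw [hjac, e1, eBc, appendCLM_apply, append_zero_eq_sum, map_sum]
      rw [Finset.sum_apply]
      refine Finset.sum_congr rfl (fun i' _ => ?_)
      rw [map_smul]
      rfl
    simp only [append_natAdd, Matrix.mulVec, Matrix.transpose_apply, dotProduct]
    congr 2
    calc ∑ k, jac h a0 k (Fin.castAdd l (Fin.natAdd M i₀)) * z k
        = ∑ k, ∑ i' : Fin m,
            Df (Pi.single (Fin.castAdd l i₀) 1) i' * jac g c0 k (Fin.natAdd M i') * z k := by
          refine Finset.sum_congr rfl (fun k _ => ?_)
          rw [key k, Finset.sum_mul]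
      _ = ∑ i' : Fin m, jac f b0 i' (Fin.castAdd l i₀)
            * ∑ k, jac g c0 k (Fin.natAdd M i') * z k := by
          rw [Finset.sum_comm]
          refine Finset.sum_congr rfl (fun i' _ => ?_)
          rw [Finset.mul_sum]
          exact Finset.sum_congr rfl (fun k _ => by rw [mul_assoc]; rfl)
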